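/- Let Ω ∈ ℝ^{n×d} and Ω̃ ∈ ℝ^{ñ×d} be matrices such that the stacked matrix Ω_F = [Ω; Ω̃] ∈ ℝ^{(n+ñ)×d} is a frame with lower frame bound A > 0. Let B ∈ ℝ^{m₂×d} satisfy ‖B Ω̃† v‖₂ ≥ C₁₁‖v‖₂ for all v ∈ ℝ^{ñ} and ‖B(I − Ω̃†Ω̃)z‖₂ ≤ C₁₂‖z‖₂ for all z ∈ ℝ^d, where C₁₁ > 0, C₁₂ ≥ 0 and C₁₂/(C₁₁·A) < 1. Let A_mat ∈ ℝ^{m₁×n}, k ≥ 1, and suppose 𝒜 : ℝ^{m₁} → ℝ^n satisfies, for every α ∈ ℝ^n and every e₁ ∈ ℝ^{m₁}, ‖α − 𝒜(A_mat α + e₁)‖₂ ≤ C₁₃‖e₁‖₂ + (C₁₄/√k)‖α − [α]_k‖₁, for fixed constants C₁₃, C₁₄ ≥ 0. Let x ∈ ℝ^d, e₁ ∈ ℝ^{m₁}, e₂ ∈ ℝ^{m₂}, y₁ = A_mat Ω x + e₁, y₂ = Bx + e₂, ŵ = 𝒜(y₁), and let x̂ be a minimizer of ‖Ω x̃ − ŵ‖₂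 over all x̃ satisfying ‖B x̃ − y₂‖₂ ≤ ‖e₂‖₂. Then, with c = 1 − C₁₂/(A·C₁₁), β = 1/(A·c), and γ = 1/(A·C₁₁·c), one has ‖x̂ − x‖₂ ≤ 2β(C₁₃‖e₁‖₂ + (C₁₄/√k)‖Ωx − [Ωx]_k‖₁) + 2γ‖e₂‖₂. -/

import Mathlib

open Matrix

/-- The Euclidean (ℓ₂) norm of a finitely-indexed real vector. -/
noncomputable def l2norm {ι : Type*} [Fintype ι] (v : ι → ℝ) : ℝ :=
  Real.sqrt (∑ i, v i ^ 2)

/-- The ℓ₁ norm of a finitely-indexed real vector. -/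
def l1norm {ι : Type*} [Fintype ι] (v : ι → ℝ) : ℝ :=
  ∑ i, |v i|

/-- `αk` is a best `k`-term approximation of `α`: it keeps the `k`
largest-magnitude entries of `α` and sets the others to zero. -/
def IsBestKTermApprox {ι : Type*} [Fintype ι] [DecidableEq ι] (k : ℕ)
    (α αk : ι → ℝ) : Prop :=
  ∃ S : Finset ι, S.card = min k (Fintype.card ι) ∧
    (∀ i, αk i = if i ∈ S then α i else 0) ∧
    ∀ i ∈ S, ∀ j ∉ S, |α j| ≤ |α i|

/-- `P` is the Moore–Penrose pseudo-inverse of `Ω` (the four Penrose conditions). -/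
def IsMoorePenroseInv {ι κ : Type*} [Fintype ι] [Fintype κ]
    (Ω : Matrix ι κ ℝ) (P : Matrix κ ι ℝ) : Prop :=
  Ω * P * Ω = Ω ∧ P * Ω * P = P ∧ (Ω * P)ᵀ = Ω * P ∧ (P * Ω)ᵀ = P * Ω

lemma l2norm_eq {ι : Type*} [Fintype ι] (v : ι → ℝ) :
    l2norm v = ‖(WithLp.equiv 2 (ι → ℝ)).symm v‖ := by
  rw [EuclideanSpace.norm_eq]
  simp [l2norm, sq_abs]

lemma l2norm_nonneg {ι : Type*} [Fintype ι] (v : ι → ℝ) : 0 ≤ l2norm v :=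
  Real.sqrt_nonneg _

lemma l2norm_neg {ι : Type*} [Fintype ι] (v : ι → ℝ) : l2norm (-v) = l2norm v := by
  simp [l2norm]

lemma l2norm_add_le {ι : Type*} [Fintype ι] (u v : ι → ℝ) :
    l2norm (u + v) ≤ l2norm u + l2norm v := by
  simp only [l2norm_eq]
  rw [show (WithLp.equiv 2 (ι → ℝ)).symm (u + v)
      = (WithLp.equiv 2 (ι → ℝ)).symm u + (WithLp.equiv 2 (ι → ℝ)).symm v by rfl]
  exact norm_add_le _ _

lemma l2norm_sub_le {ι : Type*} [Fintype ι] (u v : ι → ℝ) :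
    l2norm (u - v) ≤ l2norm u + l2norm v := by
  have := l2norm_add_le u (-v)
  simpa [sub_eq_add_neg, l2norm_neg] using this

lemma l2norm_elim_le {ι κ : Type*} [Fintype ι] [Fintype κ] (u : ι → ℝ) (v : κ → ℝ) :
    l2norm (Sum.elim u v) ≤ l2norm u + l2norm v := by
  unfold l2norm
  rw [Fintype.sum_sum_type]
  simp only [Sum.elim_inl, Sum.elim_inr]
  set a := ∑ i, u i ^ 2 with ha
  set b := ∑ i, v i ^ 2 with hb
  have ha0 : 0 ≤ a := by positivity
  have hb0 : 0 ≤ b := by positivity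
  have h1 : Real.sqrt (a + b) ≤ Real.sqrt ((Real.sqrt a + Real.sqrt b) ^ 2) :=
    Real.sqrt_le_sqrt (by nlinarith [Real.sq_sqrt ha0, Real.sq_sqrt hb0, Real.sqrt_nonneg a, Real.sqrt_nonneg b])
  rwa [Real.sqrt_sq (by positivity)] at h1

/-- stable signal recovery from samples of a partial frame. -/
theorem stmt_5 {n nt d m₁ m₂ : ℕ} (k : ℕ) (hk : 1 ≤ k)
    (Ω : Matrix (Fin n) (Fin d) ℝ) (Ωtil : Matrix (Fin nt) (Fin d) ℝ)
    (A : ℝ) (hA : 0 < A)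
    -- The stacked matrix Ω_F = [Ω; Ω̃] is a frame with lower frame bound A:
    (hframe : ∀ z : Fin d → ℝ,
      A * l2norm z ≤ l2norm (Sum.elim (Ω.mulVec z) (Ωtil.mulVec z)))
    (P : Matrix (Fin d) (Fin nt) ℝ) (hP : IsMoorePenroseInv Ωtil P)
    (B : Matrix (Fin m₂) (Fin d) ℝ)
    (C₁₁ C₁₂ : ℝ) (hC₁₁ : 0 < C₁₁) (hC₁₂ : 0 ≤ C₁₂)
    (hratio : C₁₂ / (C₁₁ * A) < 1)
    -- σ_min(B Ω̃†) ≥ C₁₁: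
    (hBP : ∀ v : Fin nt → ℝ, C₁₁ * l2norm v ≤ l2norm (B.mulVec (P.mulVec v)))
    -- ‖B (I − Ω̃† Ω̃)‖ ≤ C₁₂:
    (hBI : ∀ z : Fin d → ℝ,
      l2norm (B.mulVec (z - P.mulVec (Ωtil.mulVec z))) ≤ C₁₂ * l2norm z)
    (Amat : Matrix (Fin m₁) (Fin n) ℝ)
    (C₁₃ C₁₄ : ℝ) (hC₁₃ : 0 ≤ C₁₃) (hC₁₄ : 0 ≤ C₁₄)
    (Arec : (Fin m₁ → ℝ) → (Fin n → ℝ))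
    (hArec : ∀ (α : Fin n → ℝ) (e₁ : Fin m₁ → ℝ) (αk : Fin n → ℝ),
      IsBestKTermApprox k α αk →
      l2norm (α - Arec (Amat.mulVec α + e₁)) ≤
        C₁₃ * l2norm e₁ + (C₁₄ / Real.sqrt k) * l1norm (α - αk))
    (x : Fin d → ℝ) (e₁ : Fin m₁ → ℝ) (e₂ : Fin m₂ → ℝ)
    (y₁ : Fin m₁ → ℝ) (hy₁ : y₁ = Amat.mulVec (Ω.mulVec x) + e₁)
    (y₂ : Fin m₂ → ℝ) (hy₂ : y₂ = B.mulVec x + e₂)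
    (wHat : Fin n → ℝ) (hwHat : wHat = Arec y₁)
    (xHat : Fin d → ℝ)
    (hfeas : l2norm (B.mulVec xHat - y₂) ≤ l2norm e₂)
    (hmin : ∀ xTil : Fin d → ℝ, l2norm (B.mulVec xTil - y₂) ≤ l2norm e₂ →
      l2norm (Ω.mulVec xHat - wHat) ≤ l2norm (Ω.mulVec xTil - wHat))
    (wk : Fin n → ℝ) (hwk : IsBestKTermApprox k (Ω.mulVec x) wk)
    (c β γ : ℝ) (hc : c = 1 - C₁₂ / (A * C₁₁))
    (hβ : β = 1 / (A * c)) (hγ : γ = 1 / (A * C₁₁ * c)) :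
    l2norm (xHat - x) ≤
      2 * β * (C₁₃ * l2norm e₁ + (C₁₄ / Real.sqrt k) * l1norm (Ω.mulVec x - wk)) +
        2 * γ * l2norm e₂ := by

  classical
  set E : ℝ := C₁₃ * l2norm e₁ + (C₁₄ / Real.sqrt k) * l1norm (Ω.mulVec x - wk) with hE
  obtain ⟨h, hh⟩ : ∃ v : Fin d → ℝ, v = xHat - x := ⟨_, rfl⟩
  rw [← hh]
  have hC12lt : C₁₂ < C₁₁ * A := by
    have hpos : (0:ℝ) < C₁₁ * A := mul_pos hC₁₁ hA
    exact (div_lt_one hpos).mp hratio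
  have hDpos : 0 < C₁₁ * A - C₁₂ := by linarith
  -- step 0 : recovery error
  have step0 : l2norm (Ω.mulVec x - wHat) ≤ E := by
    rw [hwHat, hy₁]
    exact hArec _ _ _ hwk
  -- x is feasible
  have xfeas : l2norm (B.mulVec x - y₂) ≤ l2norm e₂ := by
    have : B.mulVec x - y₂ = -e₂ := by rw [hy₂]; abel
    rw [this, l2norm_neg]
  -- step 1 : ‖Ω h‖ ≤ 2 E
  have step1 : l2norm (Ω.mulVec h) ≤ 2 * E := by
    have hdec : Ω.mulVec h = (Ω.mulVec xHat - wHat) - (Ω.mulVec x - wHat) := by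
      rw [hh, Matrix.mulVec_sub]; abel
    have h1 := l2norm_sub_le (Ω.mulVec xHat - wHat) (Ω.mulVec x - wHat)
    have h2 := hmin x xfeas
    rw [hdec]
    linarith
  -- step 2 : ‖B h‖ ≤ 2 ‖e₂‖
  have step2 : l2norm (B.mulVec h) ≤ 2 * l2norm e₂ := by
    have hdec : B.mulVec h = (B.mulVec xHat - y₂) + e₂ := by
      rw [hh, Matrix.mulVec_sub, hy₂]; abel
    have h1 := l2norm_add_le (B.mulVec xHat - y₂) e₂
    rw [hdec]
    linarith
  -- step 3 : C₁₁ ‖Ω̃ h‖ ≤ 2 ‖e₂‖ + C₁₂ ‖h‖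
  have step3 : C₁₁ * l2norm (Ωtil.mulVec h) ≤ 2 * l2norm e₂ + C₁₂ * l2norm h := by
    have h1 := hBP (Ωtil.mulVec h)
    have hdec : B.mulVec h - B.mulVec (h - P.mulVec (Ωtil.mulVec h)) =
        B.mulVec (P.mulVec (Ωtil.mulVec h)) := by
      rw [Matrix.mulVec_sub, sub_sub_cancel]
    have h2 := l2norm_sub_le (B.mulVec h) (B.mulVec (h - P.mulVec (Ωtil.mulVec h)))
    have h3 := hBI h
    rw [← hdec] at h1
    linarith
  -- step 4 : frame inequality
  have step4 : A * l2norm h ≤ l2norm (Ω.mulVec h) + l2norm (Ωtil.mulVec h) :=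
    (hframe h).trans (l2norm_elim_le _ _)
  -- combine
  have key : (C₁₁ * A - C₁₂) * l2norm h ≤ 2 * C₁₁ * E + 2 * l2norm e₂ := by
    nlinarith [mul_le_mul_of_nonneg_left step4 hC₁₁.le,
      mul_le_mul_of_nonneg_left step1 hC₁₁.le]
  have hmain : l2norm h ≤ (2 * C₁₁ * E + 2 * l2norm e₂) / (C₁₁ * A - C₁₂) := by
    rw [le_div_iff₀ hDpos]
    nlinarith [key]
  have heq : 2 * β * E + 2 * γ * l2norm e₂
      = (2 * C₁₁ * E + 2 * l2norm e₂) / (C₁₁ * A - C₁₂) := by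
    rw [hβ, hγ, hc]
    have h1 : A * C₁₁ ≠ 0 := by positivity
    have h2 : C₁₁ * A - C₁₂ ≠ 0 := hDpos.ne'
    have h3 : A * C₁₁ - C₁₂ ≠ 0 := by rw [mul_comm]; exact h2
    have hcne : A * (1 - C₁₂ / (A * C₁₁)) = (C₁₁ * A - C₁₂) / C₁₁ := by
      field_simp
    rw [hcne, show A * C₁₁ * (1 - C₁₂ / (A * C₁₁)) = C₁₁ * A - C₁₂ by field_simp]
    rw [one_div_div]
    field_simp
  rw [heq]
  exact hmain
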